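/- arXiv:math/0608048 — 3 statements merged into one kernel-verified Lean document; each statement's English description precedes it below -/
import Mathlib

section
/- Let M be a formal real hypersurface in ℂᴺ of m-infinite type given in normal coordinates by the complexified defining equation w = Q(z,χ,τ) with Q(z,χ,τ) = τ + τᵐ Q̃(z,χ,τ), where Q̃(z,0,τ) = Q̃(0,χ,τ) = 0. Let H = (F,G): (ℂᴺ,0) → (ℂᴺ,0) be a formal holomorphic map sending M into itself, i.e. G(z,Q(z,χ,τ)) = Q(F(z,Q(z,χ,τ)), F̄(χ,τ), Ḡ(χ,τ)) as formal power series. If H is not transversally flat, with transversal order k (i.e. G(z,w) = wᵏ G̃(z,w) with G̃(z,0) ≢ 0), then G_{wᵏ}(z,0) is a constant (independent of z) and is a nonzero real number. -/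
noncomputable section
open MvPowerSeries Complex

instance {σ : Type*} : IsDomain (MvPowerSeries σ ℂ) := NoZeroDivisors.to_isDomain _

/-- total degree of a multi-index -/
def deg {σ : Type*} (d : σ →₀ ℕ) : ℕ := d.sum fun _ n => n

/-- substitution of formal power series (intended for substituted series with
vanishing constant term, in which case each coefficient of the result is the
finite sum below) -/
def pssubst {σ τ : Type*} [Fintype σ] [DecidableEq σ] [Fintype τ] [DecidableEq τ]
    (a : σ → MvPowerSeries τ ℂ) (f : MvPowerSeries σ ℂ) : MvPowerSeries τ ℂ :=
  fun μ => ∑ d ∈ Finset.Iic (Finsupp.equivFunOnFinite.symm fun _ => deg μ),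
    MvPowerSeries.coeff d f * MvPowerSeries.coeff μ (∏ i, (a i) ^ (d i))

/-- formal partial derivative ∂/∂X i -/
def pd {σ : Type*} [DecidableEq σ] (i : σ) (f : MvPowerSeries σ ℂ) : MvPowerSeries σ ℂ :=
  fun d => ((d i : ℂ) + 1) * MvPowerSeries.coeff (d + Finsupp.single i 1) f

/-- the series with complex-conjugated coefficients -/
def psconj {σ : Type*} (f : MvPowerSeries σ ℂ) : MvPowerSeries σ ℂ :=
  MvPowerSeries.map (starRingEnd ℂ) f

/-- variables (z, w) of source/target space -/
abbrev Wv (n : ℕ) : Type := Fin n ⊕ Unit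
/-- variables (z, χ, τ) for complexified defining equations -/
abbrev Vv (n : ℕ) : Type := Fin n ⊕ (Fin n ⊕ Unit)
/-- the variable τ -/
def tv (n : ℕ) : Vv n := Sum.inr (Sum.inr ())

/-- substitution (z, w) ↦ (z, Q(z,χ,τ)) -/
def sLHS {n : ℕ} (Q : MvPowerSeries (Vv n) ℂ) : Wv n → MvPowerSeries (Vv n) ℂ
  | Sum.inl i => MvPowerSeries.X (Sum.inl i)
  | Sum.inr _ => Q

/-- substitution (z, w) ↦ (χ, τ) -/
def sBar {n : ℕ} : Wv n → MvPowerSeries (Vv n) ℂ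
  | Sum.inl i => MvPowerSeries.X (Sum.inr (Sum.inl i))
  | Sum.inr _ => MvPowerSeries.X (Sum.inr (Sum.inr ()))

/-- the formal map H = (F, G) sends M = {w = Q(z,χ,τ)} into M' = {w' = Q'(z',χ',τ')}:
G(z,Q(z,χ,τ)) = Q'(F(z,Q(z,χ,τ)), F̄(χ,τ), Ḡ(χ,τ)) -/
def SendsInto {n : ℕ} (Q Q' : MvPowerSeries (Vv n) ℂ)
    (F : Fin n → MvPowerSeries (Wv n) ℂ) (G : MvPowerSeries (Wv n) ℂ) : Prop :=
  pssubst (sLHS Q) G =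
    pssubst (fun v => match v with
      | Sum.inl i => pssubst (sLHS Q) (F i)
      | Sum.inr (Sum.inl i) => pssubst sBar (psconj (F i))
      | Sum.inr (Sum.inr _) => pssubst sBar (psconj G)) Q'

-- ==================== auxiliary development ====================


lemma le_deg {σ : Type*} (d : σ →₀ ℕ) (v : σ) : d v ≤ deg d := by
  by_cases hv : v ∈ d.support
  · exact Finset.single_le_sum (f := fun a => d a) (fun i _ => Nat.zero_le _) hv
  · simp [Finsupp.notMem_support_iff.mp hv]

lemma coeff_pssubst {σ τ : Type*} [Fintype σ] [DecidableEq σ] [Fintype τ] [DecidableEq τ]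
    (a : σ → MvPowerSeries τ ℂ) (f : MvPowerSeries σ ℂ) (μ : τ →₀ ℕ) :
    MvPowerSeries.coeff μ (pssubst a f) =
      ∑ d ∈ Finset.Iic (Finsupp.equivFunOnFinite.symm fun _ => deg μ),
        MvPowerSeries.coeff d f * MvPowerSeries.coeff μ (∏ i, (a i) ^ (d i)) := rfl

/-- product of X-powers is a monomial -/
lemma prod_X_pow {σ τ : Type*} [DecidableEq τ] (s : Finset σ) (g : σ → τ) (e : σ → ℕ) :
    (∏ v ∈ s, (MvPowerSeries.X (g v) : MvPowerSeries τ ℂ) ^ e v) =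
      MvPowerSeries.monomial (∑ v ∈ s, Finsupp.single (g v) (e v)) 1 := by
  induction s using Finset.cons_induction with
  | empty => simp
  | cons a s ha ih =>
      rw [Finset.prod_cons, Finset.sum_cons, ih, MvPowerSeries.X_pow_eq,
        MvPowerSeries.monomial_mul_monomial, one_mul]

section main
variable {n : ℕ}

/-- multi-index is χ-free -/
def chifree (d : Vv n →₀ ℕ) : Prop := ∀ i, d (Sum.inr (Sum.inl i)) = 0

/-- all χ-free coefficients vanish -/
def chnull (f : MvPowerSeries (Vv n) ℂ) : Prop :=
  ∀ d, chifree d → MvPowerSeries.coeff d f = 0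

lemma chifree_of_add_left {d e : Vv n →₀ ℕ} (h : chifree (d + e)) : chifree d := by
  intro i; have := h i; simp only [Finsupp.add_apply] at this; omega

lemma chifree_of_add_right {d e : Vv n →₀ ℕ} (h : chifree (d + e)) : chifree e := by
  intro i; have := h i; simp only [Finsupp.add_apply] at this; omega

lemma chnull_mul_left {f g : MvPowerSeries (Vv n) ℂ} (hf : chnull f) : chnull (f * g) := by
  intro d hd
  rw [MvPowerSeries.coeff_mul]
  refine Finset.sum_eq_zero fun p hp => ?_
  rw [Finset.HasAntidiagonal.mem_antidiagonal] at hp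
  rw [hf p.1 (chifree_of_add_left (hp ▸ hd)), zero_mul]

lemma chnull_mul_right {f g : MvPowerSeries (Vv n) ℂ} (hg : chnull g) : chnull (f * g) := by
  intro d hd
  rw [MvPowerSeries.coeff_mul]
  refine Finset.sum_eq_zero fun p hp => ?_
  rw [Finset.HasAntidiagonal.mem_antidiagonal] at hp
  rw [hg p.2 (chifree_of_add_right (hp ▸ hd)), mul_zero]

lemma chnull_add {f g : MvPowerSeries (Vv n) ℂ} (hf : chnull f) (hg : chnull g) :
    chnull (f + g) := by
  intro d hd; rw [map_add, hf d hd, hg d hd, add_zero]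

/-- τ-order ≥ t along χ-free indices -/
def tord (t : ℕ) (f : MvPowerSeries (Vv n) ℂ) : Prop :=
  ∀ d, chifree d → d (tv n) < t → MvPowerSeries.coeff d f = 0

lemma tord_mul_left {t : ℕ} {f g : MvPowerSeries (Vv n) ℂ} (hf : tord t f) : tord t (f * g) := by
  intro d hd ht
  rw [MvPowerSeries.coeff_mul]
  refine Finset.sum_eq_zero fun p hp => ?_
  rw [Finset.HasAntidiagonal.mem_antidiagonal] at hp
  have h1 : p.1 (tv n) ≤ d (tv n) := by
    have := DFunLike.congr_fun hp (tv n); simp only [Finsupp.add_apply] at this; omega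
  rw [hf p.1 (chifree_of_add_left (hp ▸ hd)) (lt_of_le_of_lt h1 ht), zero_mul]

lemma tord_mul_right {t : ℕ} {f g : MvPowerSeries (Vv n) ℂ} (hg : tord t g) : tord t (f * g) := by
  intro d hd ht
  rw [MvPowerSeries.coeff_mul]
  refine Finset.sum_eq_zero fun p hp => ?_
  rw [Finset.HasAntidiagonal.mem_antidiagonal] at hp
  have h1 : p.2 (tv n) ≤ d (tv n) := by
    have := DFunLike.congr_fun hp (tv n); simp only [Finsupp.add_apply] at this; omega
  rw [hg p.2 (chifree_of_add_right (hp ▸ hd)) (lt_of_le_of_lt h1 ht), mul_zero]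

lemma tord_mul {s t : ℕ} {f g : MvPowerSeries (Vv n) ℂ} (hf : tord s f) (hg : tord t g) :
    tord (s + t) (f * g) := by
  intro d hd ht
  rw [MvPowerSeries.coeff_mul]
  refine Finset.sum_eq_zero fun p hp => ?_
  rw [Finset.HasAntidiagonal.mem_antidiagonal] at hp
  have h1 : p.1 (tv n) + p.2 (tv n) = d (tv n) := by
    have := DFunLike.congr_fun hp (tv n); simpa using this
  rcases lt_or_ge (p.1 (tv n)) s with h | h
  · rw [hf p.1 (chifree_of_add_left (hp ▸ hd)) h, zero_mul]
  · rw [hg p.2 (chifree_of_add_right (hp ▸ hd)) (by omega), mul_zero]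

/-- embedding of a (z,w)-multi-index as z^α τ^k index -/
def dW (α : Fin n →₀ ℕ) (k : ℕ) : Wv n →₀ ℕ :=
  α.embDomain ⟨Sum.inl, Sum.inl_injective⟩ + Finsupp.single (Sum.inr ()) k

def dA (α : Fin n →₀ ℕ) (k : ℕ) : Vv n →₀ ℕ :=
  α.embDomain ⟨Sum.inl, Sum.inl_injective⟩ + Finsupp.single (tv n) k

@[simp] lemma dW_inl (α : Fin n →₀ ℕ) (k : ℕ) (i : Fin n) : dW α k (Sum.inl i) = α i := by
  simp [dW, Finsupp.single_apply, tv]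
  exact Finsupp.embDomain_apply_self ⟨Sum.inl, Sum.inl_injective⟩ α i

@[simp] lemma dW_inr (α : Fin n →₀ ℕ) (k : ℕ) : dW α k (Sum.inr ()) = k := by
  simp [dW]
  rw [Finsupp.embDomain_notin_range]
  simp

@[simp] lemma dA_inl (α : Fin n →₀ ℕ) (k : ℕ) (i : Fin n) : dA α k (Sum.inl i) = α i := by
  simp [dA, Finsupp.single_apply, tv]
  exact Finsupp.embDomain_apply_self ⟨Sum.inl, Sum.inl_injective⟩ α i

@[simp] lemma dA_chi (α : Fin n →₀ ℕ) (k : ℕ) (i : Fin n) :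
    dA α k (Sum.inr (Sum.inl i)) = 0 := by
  simp [dA, Finsupp.single_apply, tv]
  rw [Finsupp.embDomain_notin_range]
  simp

@[simp] lemma dA_tv (α : Fin n →₀ ℕ) (k : ℕ) : dA α k (tv n) = k := by
  simp [dA, Finsupp.single_apply, tv]
  rw [Finsupp.embDomain_notin_range]
  simp [tv]

lemma chifree_dA (α : Fin n →₀ ℕ) (k : ℕ) : chifree (dA α k) := fun i => dA_chi α k i

end main

section main2
variable {n : ℕ}

/-- target variable of sBar -/
def bv : Wv n → Vv n := Sum.elim (fun i => Sum.inr (Sum.inl i)) (fun _ => tv n)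

lemma sBar_eq (v : Wv n) : sBar v = (MvPowerSeries.X (bv v) : MvPowerSeries (Vv n) ℂ) := by
  cases v with
  | inl i => rfl
  | inr u => rfl

/-- index of the monomial obtained by substituting sBar -/
def bsum (d : Wv n →₀ ℕ) : Vv n →₀ ℕ := ∑ v : Wv n, Finsupp.single (bv v) (d v)

lemma prod_sBar_pow (d : Wv n →₀ ℕ) :
    (∏ v : Wv n, (sBar v) ^ (d v)) = MvPowerSeries.monomial (bsum d) 1 := by
  have : ∀ v : Wv n, (sBar v) ^ (d v) = (MvPowerSeries.X (bv v) : MvPowerSeries (Vv n) ℂ) ^ d v :=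
    fun v => by rw [sBar_eq]
  rw [Finset.prod_congr rfl (fun v _ => this v), prod_X_pow]
  rfl

@[simp] lemma bsum_inl (d : Wv n →₀ ℕ) (i : Fin n) : bsum d (Sum.inl i) = 0 := by
  simp [bsum, Finsupp.finset_sum_apply, Finsupp.single_apply, bv, tv, Fintype.sum_sum_type]

@[simp] lemma bsum_chi (d : Wv n →₀ ℕ) (i : Fin n) :
    bsum d (Sum.inr (Sum.inl i)) = d (Sum.inl i) := by
  simp [bsum, Finsupp.finset_sum_apply, Finsupp.single_apply, bv, tv, Fintype.sum_sum_type]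

@[simp] lemma bsum_tv (d : Wv n →₀ ℕ) : bsum d (tv n) = d (Sum.inr ()) := by
  simp [bsum, Finsupp.finset_sum_apply, Finsupp.single_apply, bv, tv, Fintype.sum_sum_type]

lemma coeff_sBar_zero (f : MvPowerSeries (Wv n) ℂ) (μ : Vv n →₀ ℕ) (i : Fin n)
    (hi : μ (Sum.inl i) ≠ 0) : MvPowerSeries.coeff μ (pssubst sBar f) = 0 := by
  rw [coeff_pssubst]
  refine Finset.sum_eq_zero fun d _ => ?_
  rw [prod_sBar_pow, MvPowerSeries.coeff_monomial, if_neg, mul_zero]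
  intro h
  exact hi (h ▸ bsum_inl d i)

lemma coeff_sBar_val (f : MvPowerSeries (Wv n) ℂ) (μ : Vv n →₀ ℕ) (hχ : chifree μ)
    (hz : ∀ i, μ (Sum.inl i) = 0) :
    MvPowerSeries.coeff μ (pssubst sBar f) =
      MvPowerSeries.coeff (Finsupp.single (Sum.inr ()) (μ (tv n))) f := by
  rw [coeff_pssubst]
  set ds : Wv n →₀ ℕ := Finsupp.single (Sum.inr ()) (μ (tv n)) with hds
  have hmem : ds ∈ Finset.Iic (Finsupp.equivFunOnFinite.symm fun _ => deg μ) := by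
    rw [Finset.mem_Iic, Finsupp.le_def]
    intro v
    have : (Finsupp.equivFunOnFinite.symm fun _ : Wv n => deg μ) v = deg μ := rfl
    rw [this, hds]
    cases v with
    | inl i => simp [Finsupp.single_apply]
    | inr u => simpa [Finsupp.single_apply] using le_deg μ (tv n)
  have hbs : bsum ds = μ := by
    ext v
    cases v with
    | inl i => simp [hz i]
    | inr vv =>
      cases vv with
      | inl i => simp [hds, Finsupp.single_apply, hχ i]
      | inr u =>
        show bsum ds (tv n) = μ (tv n)
        rw [bsum_tv, hds]
        simp
  rw [Finset.sum_eq_single_of_mem ds hmem]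
  · rw [prod_sBar_pow, hbs, MvPowerSeries.coeff_monomial, if_pos rfl, mul_one]
  · intro b _ hb
    rw [prod_sBar_pow, MvPowerSeries.coeff_monomial, if_neg, mul_zero]
    intro h
    apply hb
    ext v
    cases v with
    | inl i =>
      have := (DFunLike.congr_fun h (Sum.inr (Sum.inl i))).symm
      rw [bsum_chi] at this
      rw [this, hχ i, hds, Finsupp.single_apply]
      simp
    | inr u =>
      have := (DFunLike.congr_fun h (tv n)).symm
      rw [bsum_tv] at this
      simp [hds, ← this]

end main2

section main3
variable {n : ℕ}

lemma Q_pow (Qt : MvPowerSeries (Vv n) ℂ) (hQt : chnull Qt) (m : ℕ) (j : ℕ) :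
    ∃ E, (MvPowerSeries.X (tv n) + MvPowerSeries.X (tv n) ^ m * Qt) ^ j =
      (MvPowerSeries.X (tv n) : MvPowerSeries (Vv n) ℂ) ^ j + E ∧ chnull E := by
  induction j with
  | zero => exact ⟨0, by simp, fun d _ => by simp⟩
  | succ j ih =>
      obtain ⟨E, hE, hEn⟩ := ih
      have hb : chnull (MvPowerSeries.X (tv n) ^ m * Qt) := chnull_mul_right hQt
      refine ⟨MvPowerSeries.X (tv n) * E
          + (MvPowerSeries.X (tv n) ^ m * Qt) * (MvPowerSeries.X (tv n) ^ j + E), ?_, ?_⟩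
      · rw [pow_succ, hE]
        ring
      · exact chnull_add (chnull_mul_right hEn) (chnull_mul_left hb)

/-- index of the z-monomial times τ-power appearing in the LHS substitution -/
def wsum (b : Wv n →₀ ℕ) : Vv n →₀ ℕ :=
  (∑ i : Fin n, Finsupp.single (Sum.inl i : Vv n) (b (Sum.inl i))) +
    Finsupp.single (tv n) (b (Sum.inr ()))

@[simp] lemma wsum_inl (b : Wv n →₀ ℕ) (i : Fin n) : wsum b (Sum.inl i) = b (Sum.inl i) := by
  simp [wsum, Finsupp.finset_sum_apply, Finsupp.single_apply, tv]

@[simp] lemma wsum_chi (b : Wv n →₀ ℕ) (i : Fin n) : wsum b (Sum.inr (Sum.inl i)) = 0 := by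
  simp [wsum, Finsupp.finset_sum_apply, Finsupp.single_apply, tv]

@[simp] lemma wsum_tv (b : Wv n →₀ ℕ) : wsum b (tv n) = b (Sum.inr ()) := by
  simp [wsum, Finsupp.finset_sum_apply, Finsupp.single_apply, tv]

lemma prod_sLHS (Q : MvPowerSeries (Vv n) ℂ) (b : Wv n →₀ ℕ) :
    (∏ v : Wv n, (sLHS Q v) ^ (b v)) =
      (MvPowerSeries.monomial
        (∑ i : Fin n, Finsupp.single (Sum.inl i : Vv n) (b (Sum.inl i))) 1) *
        Q ^ (b (Sum.inr ())) := by
  rw [Fintype.prod_sum_type]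
  congr 1
  · rw [← prod_X_pow Finset.univ (fun i : Fin n => (Sum.inl i : Vv n)) (fun i => b (Sum.inl i))]
    exact Finset.prod_congr rfl fun i _ => rfl
  · simp [sLHS]

lemma coeff_dA_prod_sLHS (Qt : MvPowerSeries (Vv n) ℂ) (hQt : chnull Qt) (m : ℕ)
    (α : Fin n →₀ ℕ) (k : ℕ) (b : Wv n →₀ ℕ) :
    MvPowerSeries.coeff (dA α k)
        (∏ v : Wv n, (sLHS (MvPowerSeries.X (tv n) + MvPowerSeries.X (tv n) ^ m * Qt) v) ^ (b v)) =
      if b = dW α k then 1 else 0 := by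
  classical
  obtain ⟨E, hE, hEn⟩ := Q_pow Qt hQt m (b (Sum.inr ()))
  rw [prod_sLHS, hE, mul_add, map_add,
    chnull_mul_right (g := E) hEn (dA α k) (chifree_dA α k), add_zero,
    MvPowerSeries.X_pow_eq, MvPowerSeries.monomial_mul_monomial, one_mul,
    MvPowerSeries.coeff_monomial]
  have hcond : (dA α k = wsum b) ↔ b = dW α k := by
    constructor
    · intro h
      ext v
      cases v with
      | inl i =>
        have := DFunLike.congr_fun h (Sum.inl i)
        rw [dA_inl, wsum_inl] at this
        simp [← this]
      | inr u =>
        cases u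
        have := DFunLike.congr_fun h (tv n)
        rw [dA_tv, wsum_tv] at this
        simp [← this]
    · intro h
      subst h
      ext v
      cases v with
      | inl i => simp
      | inr vv =>
        cases vv with
        | inl i => simp
        | inr u =>
          show dA α k (tv n) = wsum (dW α k) (tv n)
          rw [dA_tv, wsum_tv, dW_inr]
  show (if dA α k = wsum b then (1 : ℂ) else 0) = if b = dW α k then 1 else 0
  simp only [hcond]

lemma keyA (Qt : MvPowerSeries (Vv n) ℂ) (hQt : chnull Qt) (m : ℕ)
    (G : MvPowerSeries (Wv n) ℂ) (α : Fin n →₀ ℕ) (k : ℕ) :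
    MvPowerSeries.coeff (dA α k)
        (pssubst (sLHS (MvPowerSeries.X (tv n) + MvPowerSeries.X (tv n) ^ m * Qt)) G) =
      MvPowerSeries.coeff (dW α k) G := by
  classical
  rw [coeff_pssubst]
  have hmem : dW α k ∈ Finset.Iic (Finsupp.equivFunOnFinite.symm fun _ => deg (dA α k)) := by
    rw [Finset.mem_Iic, Finsupp.le_def]
    intro v
    have hb : (Finsupp.equivFunOnFinite.symm fun _ : Wv n => deg (dA α k)) v = deg (dA α k) := rfl
    rw [hb]
    cases v with
    | inl i =>
      rw [dW_inl]
      simpa using le_deg (dA α k) (Sum.inl i)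
    | inr u =>
      cases u
      rw [dW_inr]
      simpa using le_deg (dA α k) (tv n)
  rw [Finset.sum_eq_single_of_mem _ hmem]
  · rw [coeff_dA_prod_sLHS Qt hQt m, if_pos rfl, mul_one]
  · intro b _ hb
    rw [coeff_dA_prod_sLHS Qt hQt m, if_neg hb, mul_zero]

end main3

section main4
variable {n : ℕ}

lemma tord_Gs (k : ℕ) (G Gt : MvPowerSeries (Wv n) ℂ)
    (hGt : G = (MvPowerSeries.X (Sum.inr ())) ^ k * Gt) :
    tord k (pssubst sBar (psconj G)) := by
  intro d hχ ht
  by_cases hz : ∀ i, d (Sum.inl i) = 0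
  · rw [coeff_sBar_val _ d hχ hz, psconj, MvPowerSeries.coeff_map, hGt,
      MvPowerSeries.X_pow_eq, MvPowerSeries.coeff_monomial_mul, if_neg, map_zero]
    rw [Finsupp.single_le_iff, Finsupp.single_apply, if_pos rfl]
    omega
  · push_neg at hz
    obtain ⟨i, hi⟩ := hz
    exact coeff_sBar_zero _ d i hi

lemma tord_Fs (f : MvPowerSeries (Wv n) ℂ)
    (hf : MvPowerSeries.constantCoeff f = 0) :
    tord 1 (pssubst sBar (psconj f)) := by
  intro d hχ ht
  by_cases hz : ∀ i, d (Sum.inl i) = 0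
  · rw [coeff_sBar_val _ d hχ hz, psconj, MvPowerSeries.coeff_map]
    have : d (tv n) = 0 := by omega
    rw [this, Finsupp.single_zero, MvPowerSeries.coeff_zero_eq_constantCoeff, hf, map_zero]
  · push_neg at hz
    obtain ⟨i, hi⟩ := hz
    exact coeff_sBar_zero _ d i hi

lemma prod_A (A : Vv n → MvPowerSeries (Vv n) ℂ) (d : Vv n →₀ ℕ) :
    (∏ v : Vv n, A v ^ d v) =
      (∏ i : Fin n, A (Sum.inl i) ^ d (Sum.inl i)) *
        ((∏ i : Fin n, A (Sum.inr (Sum.inl i)) ^ d (Sum.inr (Sum.inl i))) *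
          A (tv n) ^ d (tv n)) := by
  rw [Fintype.prod_sum_type, Fintype.prod_sum_type]
  congr 1
  simp [tv]

lemma keyB (m' : ℕ) (hm' : 1 ≤ m') (Qt' : MvPowerSeries (Vv n) ℂ) (hQt' : chnull Qt')
    (A : Vv n → MvPowerSeries (Vv n) ℂ) (k : ℕ)
    (hA1 : ∀ i, tord 1 (A (Sum.inr (Sum.inl i))))
    (hAt : tord k (A (tv n)))
    (hAt0 : MvPowerSeries.coeff 0 (A (tv n)) = 0)
    (α : Fin n →₀ ℕ) :
    MvPowerSeries.coeff (dA α k)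
        (pssubst A (MvPowerSeries.X (tv n) + MvPowerSeries.X (tv n) ^ m' * Qt')) =
      MvPowerSeries.coeff (dA α k) (A (tv n)) := by
  classical
  rw [coeff_pssubst]
  have hchn' : chnull (MvPowerSeries.X (tv n) ^ m' * Qt') := chnull_mul_right hQt'
  have hPd0 : (∏ v : Vv n, A v ^ (Finsupp.single (tv n) 1) v) = A (tv n) := by
    rw [prod_A]
    have h1 : ∀ i : Fin n, (Finsupp.single (tv n) 1) (Sum.inl i : Vv n) = 0 := by
      intro i; simp [Finsupp.single_apply, tv]
    have h2 : ∀ i : Fin n, (Finsupp.single (tv n) 1) (Sum.inr (Sum.inl i) : Vv n) = 0 := by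
      intro i; simp [Finsupp.single_apply, tv]
    have h3 : (Finsupp.single (tv n) 1) (tv n) = 1 := by simp
    simp only [h1, h2, h3, pow_zero, pow_one, Finset.prod_const_one, one_mul]
  rw [Finset.sum_eq_single (Finsupp.single (tv n) 1)]
  · rw [hPd0, map_add, MvPowerSeries.coeff_X, if_pos rfl,
      hchn' _ (by intro i; simp [Finsupp.single_apply, tv]), add_zero, one_mul]
  · intro b _ hb
    by_cases hχb : chifree b
    · have hQ'b : MvPowerSeries.coeff b
          (MvPowerSeries.X (tv n) + MvPowerSeries.X (tv n) ^ m' * Qt') = 0 := by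
        rw [map_add, MvPowerSeries.coeff_X, if_neg hb, hchn' b hχb, add_zero]
      rw [hQ'b, zero_mul]
    · simp only [chifree, not_forall] at hχb
      obtain ⟨i0, hi0⟩ := hχb
      by_cases hbt : b (tv n) = 0
      · have hQ'b : MvPowerSeries.coeff b
            (MvPowerSeries.X (tv n) + MvPowerSeries.X (tv n) ^ m' * Qt') = 0 := by
          rw [map_add, MvPowerSeries.coeff_X, if_neg hb, MvPowerSeries.X_pow_eq,
            MvPowerSeries.coeff_monomial_mul, if_neg, add_zero]
          rw [Finsupp.single_le_iff, hbt]
          omega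
        rw [hQ'b, zero_mul]
      · have h3 : tord (k + 1) (∏ v : Vv n, A v ^ b v) := by
          rw [prod_A]
          apply tord_mul_right
          have hF : tord 1 (∏ i : Fin n, A (Sum.inr (Sum.inl i)) ^ b (Sum.inr (Sum.inl i))) := by
            rw [← Finset.mul_prod_erase Finset.univ _ (Finset.mem_univ i0)]
            apply tord_mul_left
            obtain ⟨e, he⟩ : ∃ e, b (Sum.inr (Sum.inl i0)) = e + 1 :=
              ⟨b (Sum.inr (Sum.inl i0)) - 1, by omega⟩
            rw [he, pow_succ]
            exact tord_mul_right (hA1 i0)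
          have hG : tord k (A (tv n) ^ b (tv n)) := by
            obtain ⟨e, he⟩ : ∃ e, b (tv n) = e + 1 := ⟨b (tv n) - 1, by omega⟩
            rw [he, pow_succ]
            exact tord_mul_right hAt
          have := tord_mul hF hG
          rwa [Nat.add_comm] at this
        rw [h3 (dA α k) (chifree_dA α k) (by simp), mul_zero]
  · intro hd0
    have hdeg : deg (dA α k) = 0 := by
      by_contra h
      apply hd0
      rw [Finset.mem_Iic, Finsupp.le_def]
      intro v
      have hb : (Finsupp.equivFunOnFinite.symm fun _ : Vv n => deg (dA α k)) v = deg (dA α k) :=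
        rfl
      rw [hb, Finsupp.single_apply]
      split <;> omega
    have hdA0 : dA α k = 0 := by
      ext v
      have := le_deg (dA α k) v
      rw [hdeg] at this
      simpa using this
    rw [hPd0, hdA0, hAt0, mul_zero]

end main4


theorem mainthm (n m m' : ℕ) (hm : 1 ≤ m) (hm' : 1 ≤ m')
    (Qt Qt' : MvPowerSeries (Vv n) ℂ)
    (hQtz0 : ∀ d : Vv n →₀ ℕ, (∀ i, d (Sum.inr (Sum.inl i)) = 0) → MvPowerSeries.coeff d Qt = 0)
    (hQt'z0 : ∀ d : Vv n →₀ ℕ, (∀ i, d (Sum.inr (Sum.inl i)) = 0) → MvPowerSeries.coeff d Qt' = 0)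
    (F : Fin n → MvPowerSeries (Wv n) ℂ) (G : MvPowerSeries (Wv n) ℂ)
    (hF0 : ∀ i, MvPowerSeries.constantCoeff (F i) = 0)
    (hG0 : MvPowerSeries.constantCoeff G = 0)
    (hmap : SendsInto (MvPowerSeries.X (tv n) + (MvPowerSeries.X (tv n)) ^ m * Qt)
      (MvPowerSeries.X (tv n) + (MvPowerSeries.X (tv n)) ^ m' * Qt') F G)
    (k : ℕ)
    (htr : ∃ Gt : MvPowerSeries (Wv n) ℂ,
      G = (MvPowerSeries.X (Sum.inr ())) ^ k * Gt ∧
      ∃ e : Wv n →₀ ℕ, e (Sum.inr ()) = 0 ∧ MvPowerSeries.coeff e Gt ≠ 0) :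
    (∀ d : Wv n →₀ ℕ, d (Sum.inr ()) = k → (∃ i, d (Sum.inl i) ≠ 0) →
      MvPowerSeries.coeff d G = 0) ∧
    (k.factorial : ℂ) * MvPowerSeries.coeff (Finsupp.single (Sum.inr ()) k) G ≠ 0 ∧
    ((k.factorial : ℂ) * MvPowerSeries.coeff (Finsupp.single (Sum.inr ()) k) G).im = 0 := by
  classical
  obtain ⟨Gt, hGt, e, hew, hce⟩ := htr
  set a0 : ℂ := MvPowerSeries.coeff (Finsupp.single (Sum.inr ()) k) G with ha0def
  set Gs : MvPowerSeries (Vv n) ℂ := pssubst sBar (psconj G) with hGsdef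
  -- the key coefficient identity
  have hAt0 : MvPowerSeries.coeff 0 Gs = 0 := by
    rw [hGsdef, coeff_sBar_val _ 0 (fun i => rfl) (fun i => rfl)]
    have h0 : (0 : Vv n →₀ ℕ) (tv n) = 0 := rfl
    rw [h0, Finsupp.single_zero, MvPowerSeries.coeff_zero_eq_constantCoeff, psconj]
    rw [MvPowerSeries.constantCoeff_map, hG0, map_zero]
  have KEY : ∀ α : Fin n →₀ ℕ, MvPowerSeries.coeff (dW α k) G =
      MvPowerSeries.coeff (dA α k) Gs := by
    intro α
    have hc := congrArg (MvPowerSeries.coeff (dA α k)) hmap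
    rw [keyA Qt hQtz0 m G α k] at hc
    rw [keyB m' hm' Qt' hQt'z0 _ k (fun i => tord_Fs (F i) (hF0 i))
      (tord_Gs k G Gt hGt) hAt0 α] at hc
    exact hc
  have evalGs : ∀ α : Fin n →₀ ℕ,
      MvPowerSeries.coeff (dA α k) Gs = if α = 0 then (starRingEnd ℂ) a0 else 0 := by
    intro α
    by_cases hα : α = 0
    · subst hα
      rw [if_pos rfl, hGsdef, coeff_sBar_val _ _ (chifree_dA 0 k) (fun i => by simp),
        dA_tv, psconj, MvPowerSeries.coeff_map]
    · rw [if_neg hα]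
      obtain ⟨i, hi⟩ := Finsupp.ne_iff.mp hα
      have hi' : dA α k (Sum.inl i) ≠ 0 := by
        rw [dA_inl]; simpa using hi
      exact coeff_sBar_zero _ _ i hi'
  -- part 1
  have part1 : ∀ d : Wv n →₀ ℕ, d (Sum.inr ()) = k → (∃ i, d (Sum.inl i) ≠ 0) →
      MvPowerSeries.coeff d G = 0 := by
    intro d hdk ⟨i, hdi⟩
    set α : Fin n →₀ ℕ := Finsupp.equivFunOnFinite.symm fun j => d (Sum.inl j) with hα
    have hdeq : d = dW α k := by
      ext v
      cases v with
      | inl j => rw [dW_inl]; rfl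
      | inr u => cases u; rw [dW_inr]; exact hdk
    have hαne : α ≠ 0 := by
      intro h
      apply hdi
      have : α i = 0 := by rw [h]; rfl
      exact this
    rw [hdeq, KEY α, evalGs α, if_neg hαne]
  -- realness
  have hre : a0 = (starRingEnd ℂ) a0 := by
    have h0 : dW (0 : Fin n →₀ ℕ) k = Finsupp.single (Sum.inr ()) k := by
      ext v
      cases v with
      | inl j => rw [dW_inl]; simp [Finsupp.single_apply]
      | inr u => cases u; rw [dW_inr]; simp
    have := KEY 0
    rw [h0, evalGs 0, if_pos rfl] at this
    exact this
  -- nonvanishing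
  have ha0 : a0 ≠ 0 := by
    intro h0
    set α : Fin n →₀ ℕ := Finsupp.equivFunOnFinite.symm fun j => e (Sum.inl j) with hα
    have hdeq : e + Finsupp.single (Sum.inr ()) k = dW α k := by
      ext v
      cases v with
      | inl j =>
        rw [dW_inl, Finsupp.add_apply, Finsupp.single_apply, if_neg (by simp), add_zero]
        rfl
      | inr u =>
        cases u
        rw [dW_inr, Finsupp.add_apply, hew, Finsupp.single_apply, if_pos rfl, zero_add]
    have hGe : MvPowerSeries.coeff (e + Finsupp.single (Sum.inr ()) k) G =
        MvPowerSeries.coeff e Gt := by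
      rw [hGt, MvPowerSeries.X_pow_eq, MvPowerSeries.coeff_monomial_mul, if_pos le_add_self,
        one_mul, add_tsub_cancel_right]
    have := KEY α
    rw [← hdeq, hGe, evalGs α] at this
    apply hce
    rw [this]
    split
    · rw [h0, map_zero]
    · rfl
  have him : a0.im = 0 := Complex.conj_eq_iff_im.mp hre.symm
  refine ⟨part1, mul_ne_zero (Nat.cast_ne_zero.mpr k.factorial_ne_zero) ha0, ?_⟩
  simp [Complex.mul_im, him]


/-- Lemma (trordnv): for a self/source hypersurface of m-infinite type and a map
H=(F,G) sending M into M' (of m'-infinite type) which is not transversally flat with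
transversal order k, the k-th transversal derivative G_{w^k}(z,0) is a nonzero real
constant. -/
theorem stmt_3 (n m m' : ℕ) (hm : 1 ≤ m) (hm' : 1 ≤ m')
    (Qt Qt' : MvPowerSeries (Vv n) ℂ)
    -- M is of m-infinite type: Q = τ + τ^m Q̃ with the normalizations below
    (hQtz0 : ∀ d : Vv n →₀ ℕ, (∀ i, d (Sum.inr (Sum.inl i)) = 0) → MvPowerSeries.coeff d Qt = 0)
    (hQtχ0 : ∀ d : Vv n →₀ ℕ, (∀ i, d (Sum.inl i) = 0) → MvPowerSeries.coeff d Qt = 0)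
    (hQtnt : ∃ d : Vv n →₀ ℕ, d (tv n) = 0 ∧ MvPowerSeries.coeff d Qt ≠ 0)
    -- M' is of m'-infinite type
    (hQt'z0 : ∀ d : Vv n →₀ ℕ, (∀ i, d (Sum.inr (Sum.inl i)) = 0) → MvPowerSeries.coeff d Qt' = 0)
    (hQt'χ0 : ∀ d : Vv n →₀ ℕ, (∀ i, d (Sum.inl i) = 0) → MvPowerSeries.coeff d Qt' = 0)
    (hQt'nt : ∃ d : Vv n →₀ ℕ, d (tv n) = 0 ∧ MvPowerSeries.coeff d Qt' ≠ 0)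
    (F : Fin n → MvPowerSeries (Wv n) ℂ) (G : MvPowerSeries (Wv n) ℂ)
    (hF0 : ∀ i, MvPowerSeries.constantCoeff (F i) = 0)
    (hG0 : MvPowerSeries.constantCoeff G = 0)
    (hmap : SendsInto (MvPowerSeries.X (tv n) + (MvPowerSeries.X (tv n)) ^ m * Qt)
      (MvPowerSeries.X (tv n) + (MvPowerSeries.X (tv n)) ^ m' * Qt') F G)
    -- H is not transversally flat, of transversal order k
    (k : ℕ)
    (htr : ∃ Gt : MvPowerSeries (Wv n) ℂ,
      G = (MvPowerSeries.X (Sum.inr ())) ^ k * Gt ∧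
      ∃ e : Wv n →₀ ℕ, e (Sum.inr ()) = 0 ∧ MvPowerSeries.coeff e Gt ≠ 0) :
    -- conclusion: G_{w^k}(z,0) is constant in z, and is a nonzero real number
    (∀ d : Wv n →₀ ℕ, d (Sum.inr ()) = k → (∃ i, d (Sum.inl i) ≠ 0) →
      MvPowerSeries.coeff d G = 0) ∧
    (k.factorial : ℂ) * MvPowerSeries.coeff (Finsupp.single (Sum.inr ()) k) G ≠ 0 ∧
    ((k.factorial : ℂ) * MvPowerSeries.coeff (Finsupp.single (Sum.inr ()) k) G).im = 0 := by
  exact mainthm n m m' hm hm' Qt Qt' hQtz0 hQt'z0 F G hF0 hG0 hmap k htr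
end
end

section
/- Let M, M' ⊂ ℂᴺ be formal real hypersurfaces of m-infinite and m'-infinite type respectively, given in normal coordinates. Assume 1 < m' ≤ m and m < 2m' − 1. Then every formal holomorphic map H = (F,G) sending M into M' is either CR-transversal (G_w(0) ≠ 0) or satisfies G ≡ 0. -/
noncomputable section
open MvPowerSeries Complex

set_option linter.unusedSectionVars false
set_option maxHeartbeats 1000000
namespace NM
variable {σ : Type*} [Fintype σ] [DecidableEq σ]
variable {σ : Type*} [Fintype σ] [DecidableEq σ]

def wdeg (ω : σ → ℕ) (d : σ →₀ ℕ) : ℕ := ∑ v, ω v * d v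

lemma wdeg_add (ω : σ → ℕ) (a b : σ →₀ ℕ) : wdeg ω (a + b) = wdeg ω a + wdeg ω b := by
  simp [wdeg, Finsupp.add_apply, mul_add, Finset.sum_add_distrib]

def OrdGe (ω : σ → ℕ) (f : MvPowerSeries σ ℂ) (k : ℕ) : Prop :=
  ∀ d, wdeg ω d < k → MvPowerSeries.coeff d f = 0

lemma OrdGe.zero (ω : σ → ℕ) (f : MvPowerSeries σ ℂ) : OrdGe ω f 0 :=
  fun _ h => absurd h (Nat.not_lt_zero _)

lemma OrdGe.mono {ω : σ → ℕ} {f : MvPowerSeries σ ℂ} {a b : ℕ} (h : OrdGe ω f a) (hba : b ≤ a) :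
    OrdGe ω f b := fun d hd => h d (lt_of_lt_of_le hd hba)

lemma OrdGe.mul {ω : σ → ℕ} {f g : MvPowerSeries σ ℂ} {a b : ℕ}
    (hf : OrdGe ω f a) (hg : OrdGe ω g b) : OrdGe ω (f * g) (a + b) := by
  intro d hd
  rw [MvPowerSeries.coeff_mul]
  apply Finset.sum_eq_zero
  intro p hp
  rw [Finset.HasAntidiagonal.mem_antidiagonal] at hp
  by_cases h1 : wdeg ω p.1 < a
  · rw [hf _ h1, zero_mul]
  · have h2 : wdeg ω p.2 < b := by
      have := wdeg_add ω p.1 p.2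
      rw [hp] at this; omega
    rw [hg _ h2, mul_zero]

lemma OrdGe.one (ω : σ → ℕ) : OrdGe ω (1 : MvPowerSeries σ ℂ) 0 := OrdGe.zero ω 1

lemma OrdGe.pow {ω : σ → ℕ} {f : MvPowerSeries σ ℂ} {a : ℕ} (hf : OrdGe ω f a) (k : ℕ) :
    OrdGe ω (f ^ k) (k * a) := by
  induction k with
  | zero => simpa using OrdGe.one ω
  | succ k ih =>
      have := ih.mul hf
      rw [← pow_succ] at this
      convert this using 1
      ring

lemma OrdGe.prod {ι : Type*} {ω : σ → ℕ} (s : Finset ι) (g : ι → MvPowerSeries σ ℂ) (b : ι → ℕ)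
    (h : ∀ i ∈ s, OrdGe ω (g i) (b i)) : OrdGe ω (∏ i ∈ s, g i) (∑ i ∈ s, b i) := by
  classical
  induction s using Finset.cons_induction with
  | empty => simpa using OrdGe.one ω
  | cons i s his ih =>
      rw [Finset.prod_cons, Finset.sum_cons]
      exact (h i (Finset.mem_cons_self i s)).mul (ih fun j hj => h j (Finset.mem_cons_of_mem hj))

lemma OrdGe.prodpow {ι : Type*} [Fintype ι] {ω : σ → ℕ} (a : ι → MvPowerSeries σ ℂ)
    (b : ι → ℕ) (e : ι →₀ ℕ) (h : ∀ i, OrdGe ω (a i) (b i)) :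
    OrdGe ω (∏ i, (a i) ^ (e i)) (∑ i, e i * b i) := by
  classical
  exact OrdGe.prod Finset.univ _ _ (fun i _ => (h i).pow (e i))

lemma prod_monomial {ι : Type*} (s : Finset ι) (u : ι → (σ →₀ ℕ)) :
    ∏ i ∈ s, (MvPowerSeries.monomial (u i)) (1 : ℂ) = MvPowerSeries.monomial (∑ i ∈ s, u i) 1 := by
  classical
  induction s using Finset.cons_induction with
  | empty => simp
  | cons i s his ih =>
      rw [Finset.prod_cons, Finset.sum_cons, ih, MvPowerSeries.monomial_mul_monomial, one_mul]

lemma prodpow_single {ι : Type*} [Fintype ι] [DecidableEq ι] (a : ι → MvPowerSeries σ ℂ)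
    (u : ι) (k : ℕ) : (∏ i, (a i) ^ ((Finsupp.single u k) i)) = (a u) ^ k := by
  classical
  rw [Finset.prod_eq_single u]
  · simp
  · intro j _ hj
    rw [Finsupp.single_apply, if_neg (fun h => hj h.symm), pow_zero]
  · intro h; exact absurd (Finset.mem_univ u) h

lemma le_deg (d : σ →₀ ℕ) (v : σ) : d v ≤ deg d := by
  by_cases h : v ∈ d.support
  · exact Finset.single_le_sum (f := fun i => d i) (fun i _ => Nat.zero_le _) h
  · simp [Finsupp.notMem_support_iff.mp h]

lemma mem_Iic_of {N : ℕ} {d : σ →₀ ℕ} (h : ∀ v, d v ≤ N) :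
    d ∈ Finset.Iic (Finsupp.equivFunOnFinite.symm fun _ => N) := by
  rw [Finset.mem_Iic]
  intro v
  simpa using h v

variable {n : ℕ}

def ωτ : Vv n → ℕ := fun v => match v with | Sum.inr (Sum.inr _) => 1 | _ => 0
def ωχ : Vv n → ℕ := fun v => match v with | Sum.inr (Sum.inl _) => 1 | _ => 0

lemma wdeg_ωτ (d : Vv n →₀ ℕ) : wdeg ωτ d = d (tv n) := by
  simp [wdeg, ωτ, Fintype.sum_sum_type, tv]

lemma wdeg_ωχ (d : Vv n →₀ ℕ) : wdeg ωχ d = ∑ i, d (Sum.inr (Sum.inl i)) := by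
  simp [wdeg, ωχ, Fintype.sum_sum_type]

lemma wdeg_ωχ_eq_zero (d : Vv n →₀ ℕ) : wdeg ωχ d = 0 ↔ ∀ i, d (Sum.inr (Sum.inl i)) = 0 := by
  rw [wdeg_ωχ, Finset.sum_eq_zero_iff]
  exact ⟨fun h i => h i (Finset.mem_univ i), fun h i _ => h i⟩

/-- (z,w) exponents mapped to (z,τ) exponents -/
def mapW (d : Wv n →₀ ℕ) : Vv n →₀ ℕ := Finsupp.equivFunOnFinite.symm fun v => match v with
  | Sum.inl i => d (Sum.inl i)
  | Sum.inr (Sum.inl _) => 0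
  | Sum.inr (Sum.inr _) => d (Sum.inr ())

/-- (z,w) exponents mapped to (χ,τ) exponents -/
def mapC (d : Wv n →₀ ℕ) : Vv n →₀ ℕ := Finsupp.equivFunOnFinite.symm fun v => match v with
  | Sum.inl _ => 0
  | Sum.inr (Sum.inl i) => d (Sum.inl i)
  | Sum.inr (Sum.inr _) => d (Sum.inr ())

/-- z-part of (z,w) exponents, as (z,χ,τ) exponents -/
def ez (d : Wv n →₀ ℕ) : Vv n →₀ ℕ := Finsupp.equivFunOnFinite.symm fun v => match v with
  | Sum.inl i => d (Sum.inl i)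
  | _ => 0

@[simp] lemma mapW_z (d : Wv n →₀ ℕ) (i : Fin n) : mapW d (Sum.inl i) = d (Sum.inl i) := rfl
@[simp] lemma mapW_c (d : Wv n →₀ ℕ) (i : Fin n) : mapW d (Sum.inr (Sum.inl i)) = 0 := rfl
@[simp] lemma mapW_t (d : Wv n →₀ ℕ) : mapW d (tv n) = d (Sum.inr ()) := rfl
@[simp] lemma mapC_z (d : Wv n →₀ ℕ) (i : Fin n) : mapC d (Sum.inl i) = 0 := rfl
@[simp] lemma mapC_c (d : Wv n →₀ ℕ) (i : Fin n) : mapC d (Sum.inr (Sum.inl i)) = d (Sum.inl i) := rfl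
@[simp] lemma mapC_t (d : Wv n →₀ ℕ) : mapC d (tv n) = d (Sum.inr ()) := rfl
@[simp] lemma ez_z (d : Wv n →₀ ℕ) (i : Fin n) : ez d (Sum.inl i) = d (Sum.inl i) := rfl
@[simp] lemma ez_c (d : Wv n →₀ ℕ) (i : Fin n) : ez d (Sum.inr (Sum.inl i)) = 0 := rfl
@[simp] lemma ez_t (d : Wv n →₀ ℕ) : ez d (tv n) = 0 := rfl


lemma prod_unit {M : Type*} [CommMonoid M] (f : Unit → M) : (∏ u : Unit, f u) = f () := by
  simp

lemma prod_sLHS (Q : MvPowerSeries (Vv n) ℂ) (d : Wv n →₀ ℕ) :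
    (∏ v, (sLHS Q v) ^ d v) = (MvPowerSeries.monomial (ez d)) 1 * Q ^ (d (Sum.inr ())) := by
  rw [Fintype.prod_sum_type]
  congr 1
  · have : ∀ i : Fin n, (sLHS Q (Sum.inl i)) ^ d (Sum.inl i)
        = (MvPowerSeries.monomial (Finsupp.single (Sum.inl i : Vv n) (d (Sum.inl i)))) 1 := by
      intro i; rw [show sLHS Q (Sum.inl i) = MvPowerSeries.X (Sum.inl i) from rfl,
        MvPowerSeries.X_pow_eq]
    rw [Finset.prod_congr rfl (fun i _ => this i), prod_monomial]
    have he : (∑ i : Fin n, Finsupp.single (Sum.inl i : Vv n) (d (Sum.inl i))) = ez d := by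
      ext v
      rw [Finsupp.finset_sum_apply]
      match v with
      | Sum.inl j => simp [Finsupp.single_apply, Sum.inl.injEq]
      | Sum.inr (Sum.inl j) => simp [Finsupp.single_apply]
      | Sum.inr (Sum.inr ()) => simp [Finsupp.single_apply]; rfl
    rw [he]
  · rw [prod_unit]
    rfl

lemma prod_sBar (d : Wv n →₀ ℕ) :
    (∏ v, (sBar (n := n) v) ^ d v) = (MvPowerSeries.monomial (mapC d)) 1 := by
  rw [Fintype.prod_sum_type]
  have h1 : ∀ i : Fin n, (sBar (n := n) (Sum.inl i)) ^ d (Sum.inl i)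
      = (MvPowerSeries.monomial (Finsupp.single (Sum.inr (Sum.inl i) : Vv n) (d (Sum.inl i)))) 1 := by
    intro i; rw [show sBar (n := n) (Sum.inl i) = MvPowerSeries.X (Sum.inr (Sum.inl i)) from rfl,
      MvPowerSeries.X_pow_eq]
  rw [Finset.prod_congr rfl (fun i _ => h1 i), prod_monomial, prod_unit,
    show sBar (n := n) (Sum.inr ()) = MvPowerSeries.X (Sum.inr (Sum.inr ())) from rfl,
    MvPowerSeries.X_pow_eq, MvPowerSeries.monomial_mul_monomial, one_mul]
  have he : ((∑ i : Fin n, Finsupp.single (Sum.inr (Sum.inl i) : Vv n) (d (Sum.inl i)))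
      + Finsupp.single (Sum.inr (Sum.inr ()) : Vv n) (d (Sum.inr ()))) = mapC d := by
    ext v
    rw [Finsupp.add_apply, Finsupp.finset_sum_apply]
    match v with
    | Sum.inl j => simp [Finsupp.single_apply]
    | Sum.inr (Sum.inl j) => simp [Finsupp.single_apply, Sum.inl.injEq]
    | Sum.inr (Sum.inr ()) => simp [Finsupp.single_apply]; rfl
  rw [he]

lemma coeff_Qpow (m : ℕ) (Qt : MvPowerSeries (Vv n) ℂ) (j : ℕ) (e : Vv n →₀ ℕ) :
    MvPowerSeries.coeff e ((MvPowerSeries.X (tv n) + MvPowerSeries.X (tv n) ^ m * Qt) ^ j) =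
    ∑ k ∈ Finset.range (j+1),
      (if Finsupp.single (tv n) (k + m * (j - k)) ≤ e
       then MvPowerSeries.coeff (e - Finsupp.single (tv n) (k + m * (j - k))) (Qt ^ (j - k))
            * (j.choose k : ℂ)
       else 0) := by
  rw [add_pow, map_sum]
  apply Finset.sum_congr rfl
  intro k hk
  have hterm : (MvPowerSeries.X (tv n) : MvPowerSeries (Vv n) ℂ) ^ k
        * (MvPowerSeries.X (tv n) ^ m * Qt) ^ (j - k) * ((j.choose k : ℕ) : MvPowerSeries (Vv n) ℂ)
      = (MvPowerSeries.monomial (Finsupp.single (tv n) (k + m * (j - k)))) 1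
        * (Qt ^ (j - k) * MvPowerSeries.C (σ := Vv n) (R := ℂ) ((j.choose k : ℕ) : ℂ)) := by
    rw [mul_pow, ← pow_mul, ← map_natCast (MvPowerSeries.C (σ := Vv n) (R := ℂ)) (j.choose k),
      MvPowerSeries.X_pow_eq, MvPowerSeries.X_pow_eq,
      show ((MvPowerSeries.monomial (Finsupp.single (tv n) k)) 1
          * ((MvPowerSeries.monomial (Finsupp.single (tv n) (m * (j - k)))) 1 * Qt ^ (j - k))
          * MvPowerSeries.C (σ := Vv n) (R := ℂ) ((j.choose k : ℕ) : ℂ))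
        = ((MvPowerSeries.monomial (Finsupp.single (tv n) k)) 1
            * (MvPowerSeries.monomial (Finsupp.single (tv n) (m * (j - k)))) 1)
          * (Qt ^ (j - k) * MvPowerSeries.C (σ := Vv n) (R := ℂ) ((j.choose k : ℕ) : ℂ)) from by ring,
      MvPowerSeries.monomial_mul_monomial, one_mul, ← Finsupp.single_add]
  rw [hterm, MvPowerSeries.coeff_monomial_mul]
  by_cases hle : Finsupp.single (tv n) (k + m * (j - k)) ≤ e
  · rw [if_pos hle, if_pos hle, one_mul, MvPowerSeries.coeff_mul_C]
  · rw [if_neg hle, if_neg hle]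

lemma coeff_Qpow_chi0 {m : ℕ} {Qt : MvPowerSeries (Vv n) ℂ} (hQ : OrdGe ωχ Qt 1)
    (j : ℕ) {e : Vv n →₀ ℕ} (he : ∀ i, e (Sum.inr (Sum.inl i)) = 0) :
    MvPowerSeries.coeff e ((MvPowerSeries.X (tv n) + MvPowerSeries.X (tv n) ^ m * Qt) ^ j)
      = if e = Finsupp.single (tv n) j then 1 else 0 := by
  rw [coeff_Qpow, Finset.sum_eq_single j]
  · rw [Nat.sub_self]
    simp only [Nat.mul_zero, Nat.add_zero, pow_zero, Nat.choose_self, Nat.cast_one, mul_one]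
    by_cases hle : Finsupp.single (tv n) j ≤ e
    · rw [if_pos hle, MvPowerSeries.coeff_one]
      by_cases h0 : e - Finsupp.single (tv n) j = 0
      · rw [if_pos h0, if_pos (le_antisymm (tsub_eq_zero_iff_le.mp h0) hle)]
      · rw [if_neg h0, if_neg (fun h => h0 (by rw [h]; simp))]
    · rw [if_neg hle, if_neg (fun h => hle h.ge)]
  · intro k hk hkj
    rw [Finset.mem_range] at hk
    by_cases hle : Finsupp.single (tv n) (k + m * (j - k)) ≤ e
    · rw [if_pos hle]
      have hz : MvPowerSeries.coeff (e - Finsupp.single (tv n) (k + m * (j - k))) (Qt ^ (j - k)) = 0 := by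
        apply hQ.pow (j - k)
        have h0 : wdeg ωχ (e - Finsupp.single (tv n) (k + m * (j - k))) = 0 := by
          rw [wdeg_ωχ_eq_zero]
          intro i
          rw [Finsupp.tsub_apply, he i]; simp
        rw [h0, mul_one]
        omega
      rw [hz, zero_mul]
    · rw [if_neg hle]
  · intro h; exact absurd (Finset.self_mem_range_succ j) h

lemma coeff_Qpow_small {m : ℕ} (hm : 1 ≤ m) (Qt : MvPowerSeries (Vv n) ℂ) (j : ℕ)
    {e : Vv n →₀ ℕ} (he : e (tv n) < j) :
    MvPowerSeries.coeff e ((MvPowerSeries.X (tv n) + MvPowerSeries.X (tv n) ^ m * Qt) ^ j) = 0 := by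
  rw [coeff_Qpow]
  apply Finset.sum_eq_zero
  intro k hk
  rw [Finset.mem_range] at hk
  rw [if_neg]
  intro hle
  have h1 := Finsupp.single_le_iff.mp hle
  have h2 : j - k ≤ m * (j - k) := Nat.le_mul_of_pos_left _ (by omega)
  omega

lemma coeff_Qpow_mid {m s : ℕ} {Qt : MvPowerSeries (Vv n) ℂ} (hm : 2 ≤ m) (hs : 1 ≤ s)
    (j : ℕ) (hj : s ≤ j) {e : Vv n →₀ ℕ} (heτ : e (tv n) = m + s - 1)
    (heχ : ¬ ∀ i, e (Sum.inr (Sum.inl i)) = 0) :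
    MvPowerSeries.coeff e ((MvPowerSeries.X (tv n) + MvPowerSeries.X (tv n) ^ m * Qt) ^ j)
      = if j = s then MvPowerSeries.coeff (e - Finsupp.single (tv n) (m + s - 1)) Qt * (s : ℂ)
        else 0 := by
  have hj1 : 1 ≤ j := le_trans hs hj
  rw [coeff_Qpow, Finset.sum_eq_single (j - 1)]
  · have hsub : j - (j - 1) = 1 := by omega
    rw [hsub]
    simp only [mul_one, pow_one]
    by_cases hjs : j = s
    · subst hjs
      have hidx : j - 1 + m = m + j - 1 := by omega
      rw [hidx, if_pos rfl, if_pos (Finsupp.single_le_iff.mpr (heτ ▸ le_refl _))]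
      congr 1
      have hch : j.choose (j - 1) = j := by
        rw [Nat.choose_symm hj1, Nat.choose_one_right]
      rw [hch]
    · rw [if_neg hjs, if_neg]
      intro hle
      have := Finsupp.single_le_iff.mp hle
      omega
  · intro k hk hkj
    rw [Finset.mem_range] at hk
    by_cases hkj2 : k = j
    · subst hkj2
      rw [Nat.sub_self]
      simp only [Nat.mul_zero, Nat.add_zero, pow_zero]
      by_cases hle : Finsupp.single (tv n) k ≤ e
      · rw [if_pos hle, MvPowerSeries.coeff_one, if_neg, zero_mul]
        intro h0
        have he2 : e = Finsupp.single (tv n) k := le_antisymm (tsub_eq_zero_iff_le.mp h0) hle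
        apply heχ
        intro i
        rw [he2, Finsupp.single_apply, if_neg]
        intro hc
        exact absurd hc (by simp [tv])
      · rw [if_neg hle]
    · have hl2 : 2 ≤ j - k := by omega
      rw [if_neg]
      intro hle
      have h1 := Finsupp.single_le_iff.mp hle
      have h4 : (m - 1) * 2 ≤ (m - 1) * (j - k) := Nat.mul_le_mul_left _ hl2
      have h5 : (m - 1) * (j - k) + 1 * (j - k) = m * (j - k) := by
        rw [← Nat.add_mul]
        congr 1
        omega
      omega
  · intro h; exact absurd (by rw [Finset.mem_range]; omega) h

lemma coeff_pssubst {σ' τ' : Type*} [Fintype σ'] [DecidableEq σ'] [Fintype τ'] [DecidableEq τ']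
    (a : σ' → MvPowerSeries τ' ℂ) (f : MvPowerSeries σ' ℂ) (μ : τ' →₀ ℕ) :
    MvPowerSeries.coeff μ (pssubst a f)
      = ∑ d ∈ Finset.Iic (Finsupp.equivFunOnFinite.symm fun _ => deg μ),
          MvPowerSeries.coeff d f * MvPowerSeries.coeff μ (∏ i, (a i) ^ (d i)) := rfl

lemma ez_le_mapW (d : Wv n →₀ ℕ) : ez d ≤ mapW d := by
  intro v
  match v with
  | Sum.inl i => simp
  | Sum.inr (Sum.inl i) => simp
  | Sum.inr (Sum.inr ()) => simp [show (Sum.inr (Sum.inr ()) : Vv n) = tv n from rfl]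

lemma coeff_L_mapW {m : ℕ} {Qt : MvPowerSeries (Vv n) ℂ} (hQ : OrdGe ωχ Qt 1)
    (G : MvPowerSeries (Wv n) ℂ) (d : Wv n →₀ ℕ) :
    MvPowerSeries.coeff (mapW d)
        (pssubst (sLHS (MvPowerSeries.X (tv n) + MvPowerSeries.X (tv n) ^ m * Qt)) G)
      = MvPowerSeries.coeff d G := by
  have hmem : d ∈ Finset.Iic (Finsupp.equivFunOnFinite.symm fun _ => deg (mapW d)) := by
    apply mem_Iic_of
    intro v
    match v with
    | Sum.inl i => exact le_trans (le_of_eq (mapW_z d i).symm) (le_deg _ _)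
    | Sum.inr () => exact le_trans (le_of_eq (mapW_t d).symm) (le_deg _ (tv n))
  rw [coeff_pssubst, Finset.sum_eq_single_of_mem d hmem]
  · rw [prod_sLHS, MvPowerSeries.coeff_monomial_mul, if_pos (ez_le_mapW d), one_mul,
      coeff_Qpow_chi0 hQ _ (fun i => by rw [Finsupp.tsub_apply]; simp)]
    rw [if_pos, mul_one]
    ext v
    match v with
    | Sum.inl i =>
        rw [Finsupp.tsub_apply]
        simp [Finsupp.single_apply, tv]
    | Sum.inr (Sum.inl i) =>
        rw [Finsupp.tsub_apply]
        simp [Finsupp.single_apply, tv]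
    | Sum.inr (Sum.inr ()) =>
        rw [Finsupp.tsub_apply]
        simp [show (Sum.inr (Sum.inr ()) : Vv n) = tv n from rfl, Finsupp.single_eq_same]
  · intro d' _ hd'
    rw [prod_sLHS, MvPowerSeries.coeff_monomial_mul]
    by_cases hle : ez d' ≤ mapW d
    · rw [if_pos hle, one_mul,
        coeff_Qpow_chi0 hQ _ (fun i => by rw [Finsupp.tsub_apply]; simp)]
      rw [if_neg, mul_zero]
      intro heq
      apply hd'
      ext v
      match v with
      | Sum.inl i =>
          have h1 := Finsupp.ext_iff.mp heq (Sum.inl i)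
          rw [Finsupp.tsub_apply] at h1
          have h2 := hle (Sum.inl i)
          simp only [ez_z, mapW_z] at h2
          simp only [ez_z, mapW_z, Finsupp.single_apply, tv] at h1
          simp at h1
          omega
      | Sum.inr () =>
          have h1 := Finsupp.ext_iff.mp heq (tv n)
          rw [Finsupp.tsub_apply] at h1
          simp only [ez_t, mapW_t, Nat.sub_zero, Finsupp.single_eq_same] at h1
          exact h1.symm
    · rw [if_neg hle, mul_zero]


lemma coeff_L_mid {m s : ℕ} {Qt : MvPowerSeries (Vv n) ℂ} (hm : 2 ≤ m) (hs : 1 ≤ s)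
    (hQ : OrdGe ωχ Qt 1) (G : MvPowerSeries (Wv n) ℂ) {μ : Vv n →₀ ℕ}
    (hμτ : μ (tv n) = m + s - 1) (hμχ : ¬ ∀ i, μ (Sum.inr (Sum.inl i)) = 0)
    (fact1 : ∀ d' : Wv n →₀ ℕ, d' (Sum.inr ()) < s → MvPowerSeries.coeff d' G = 0)
    (fact2 : ∀ d' : Wv n →₀ ℕ, (¬ ∀ i, d' (Sum.inl i) = 0) → d' (Sum.inr ()) ≤ m + s - 1 →
      MvPowerSeries.coeff d' G = 0) :
    MvPowerSeries.coeff μ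
        (pssubst (sLHS (MvPowerSeries.X (tv n) + MvPowerSeries.X (tv n) ^ m * Qt)) G)
      = MvPowerSeries.coeff (Finsupp.single (Sum.inr ()) s) G
        * (MvPowerSeries.coeff (μ - Finsupp.single (tv n) (m + s - 1)) Qt * (s : ℂ)) := by
  have hez0 : ∀ d' : Wv n →₀ ℕ, (∀ i, d' (Sum.inl i) = 0) → ez d' = 0 := by
    intro d' hz
    ext v
    match v with
    | Sum.inl i => simp [hz i]
    | Sum.inr (Sum.inl i) => simp
    | Sum.inr (Sum.inr ()) => simp [show (Sum.inr (Sum.inr ()) : Vv n) = tv n from rfl]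
  have hmem : (Finsupp.single (Sum.inr ()) s : Wv n →₀ ℕ)
      ∈ Finset.Iic (Finsupp.equivFunOnFinite.symm fun _ => deg μ) := by
    apply mem_Iic_of
    intro v
    match v with
    | Sum.inl i => simp [Finsupp.single_apply]
    | Sum.inr () =>
        rw [Finsupp.single_eq_same]
        have := le_deg μ (tv n)
        omega
  rw [coeff_pssubst, Finset.sum_eq_single_of_mem _ hmem]
  · rw [prod_sLHS, hez0 _ (fun i => by simp [Finsupp.single_apply]),
      MvPowerSeries.coeff_monomial_mul, if_pos (zero_le : 0 ≤ μ), one_mul, tsub_zero,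
      Finsupp.single_eq_same, coeff_Qpow_mid hm hs s (le_refl s) hμτ hμχ, if_pos rfl]
  · intro d' _ hd'
    by_cases hz : ∀ i, d' (Sum.inl i) = 0
    · have hd'e : d' = Finsupp.single (Sum.inr ()) (d' (Sum.inr ())) := by
        ext v
        match v with
        | Sum.inl i => simp [hz i, Finsupp.single_apply]
        | Sum.inr () => simp
      by_cases hjs : d' (Sum.inr ()) < s
      · rw [fact1 d' hjs, zero_mul]
      · rw [prod_sLHS, hez0 _ hz, MvPowerSeries.coeff_monomial_mul, if_pos (zero_le : 0 ≤ μ),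
          one_mul, tsub_zero, coeff_Qpow_mid hm hs _ (by omega) hμτ hμχ, if_neg, mul_zero]
        intro hc
        exact hd' (by rw [hd'e, hc])
    · by_cases hj : d' (Sum.inr ()) ≤ m + s - 1
      · rw [fact2 d' hz hj, zero_mul]
      · rw [prod_sLHS, MvPowerSeries.coeff_monomial_mul]
        by_cases hle : ez d' ≤ μ
        · rw [if_pos hle, one_mul, coeff_Qpow_small (by omega) Qt _
            (by rw [Finsupp.tsub_apply, ez_t, Nat.sub_zero, hμτ]; omega), mul_zero]
        · rw [if_neg hle, mul_zero]


lemma eq_single_w (d : Wv n →₀ ℕ) (hz : ∀ i, d (Sum.inl i) = 0) :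
    d = Finsupp.single (Sum.inr ()) (d (Sum.inr ())) := by
  ext v
  match v with
  | Sum.inl i => simp [hz i, Finsupp.single_apply]
  | Sum.inr () => simp

lemma coeff_Gbar_elim (G : MvPowerSeries (Wv n) ℂ) {μ : Vv n →₀ ℕ}
    (h : ∀ d' : Wv n →₀ ℕ, mapC d' = μ → MvPowerSeries.coeff d' G = 0) :
    MvPowerSeries.coeff μ (pssubst sBar (psconj G)) = 0 := by
  rw [coeff_pssubst]
  apply Finset.sum_eq_zero
  intro d' _
  rw [prod_sBar, MvPowerSeries.coeff_monomial]
  by_cases heq : μ = mapC d'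
  · rw [if_pos heq, mul_one]
    show (starRingEnd ℂ) (MvPowerSeries.coeff d' G) = 0
    rw [h d' heq.symm, map_zero]
  · rw [if_neg heq, mul_zero]

lemma coeff_Gbar_mapC (G : MvPowerSeries (Wv n) ℂ) (d : Wv n →₀ ℕ) :
    MvPowerSeries.coeff (mapC d) (pssubst sBar (psconj G))
      = (starRingEnd ℂ) (MvPowerSeries.coeff d G) := by
  have hmem : d ∈ Finset.Iic (Finsupp.equivFunOnFinite.symm fun _ => deg (mapC d)) := by
    apply mem_Iic_of
    intro v
    match v with
    | Sum.inl i => exact le_trans (le_of_eq (mapC_c d i).symm) (le_deg _ _)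
    | Sum.inr () => exact le_trans (le_of_eq (mapC_t d).symm) (le_deg _ (tv n))
  rw [coeff_pssubst, Finset.sum_eq_single_of_mem d hmem]
  · rw [prod_sBar, MvPowerSeries.coeff_monomial, if_pos rfl, mul_one]
    rfl
  · intro d'' _ hne
    rw [prod_sBar, MvPowerSeries.coeff_monomial, if_neg, mul_zero]
    intro heq
    apply hne
    ext v
    match v with
    | Sum.inl i =>
        have := Finsupp.ext_iff.mp heq (Sum.inr (Sum.inl i))
        simpa using this.symm
    | Sum.inr () =>
        have := Finsupp.ext_iff.mp heq (tv n)
        simpa using this.symm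

/-- the predicate: no χ-variables occur -/
def chiZero (e : Vv n →₀ ℕ) : Prop := ∀ i, e (Sum.inr (Sum.inl i)) = 0

instance : DecidablePred (chiZero (n := n)) := fun _ => Fintype.decidableForallFintype

lemma chiZero_zero : chiZero (0 : Vv n →₀ ℕ) := fun _ => rfl

lemma chiZero_add {a b : Vv n →₀ ℕ} (h : chiZero (a + b)) : chiZero a ∧ chiZero b := by
  constructor <;> intro i <;> have := h i <;>
    simp only [Finsupp.add_apply] at this <;> omega

lemma chiZero_mapW (d : Wv n →₀ ℕ) : chiZero (mapW d) := fun _ => rfl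

def piF (f : MvPowerSeries (Vv n) ℂ) : MvPowerSeries (Vv n) ℂ :=
  fun e => if chiZero e then MvPowerSeries.coeff e f else 0

lemma coeff_piF (f : MvPowerSeries (Vv n) ℂ) (e : Vv n →₀ ℕ) :
    MvPowerSeries.coeff e (piF f) = if chiZero e then MvPowerSeries.coeff e f else 0 := rfl

def piH : MvPowerSeries (Vv n) ℂ →+* MvPowerSeries (Vv n) ℂ where
  toFun := piF
  map_one' := by
    apply MvPowerSeries.ext
    intro e
    rw [coeff_piF]
    by_cases h : chiZero e
    · rw [if_pos h]
    · rw [if_neg h, MvPowerSeries.coeff_one, if_neg]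
      intro h0
      exact h (h0 ▸ chiZero_zero)
  map_mul' f g := by
    apply MvPowerSeries.ext
    intro e
    rw [coeff_piF]
    by_cases h : chiZero e
    · rw [if_pos h, MvPowerSeries.coeff_mul, MvPowerSeries.coeff_mul]
      apply Finset.sum_congr rfl
      intro p hp
      rw [Finset.HasAntidiagonal.mem_antidiagonal] at hp
      obtain ⟨h1, h2⟩ := chiZero_add (hp.symm ▸ h)
      show _ = MvPowerSeries.coeff p.1 (piF f) * MvPowerSeries.coeff p.2 (piF g)
      rw [coeff_piF, coeff_piF, if_pos h1, if_pos h2]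
    · rw [if_neg h, MvPowerSeries.coeff_mul]
      symm
      apply Finset.sum_eq_zero
      intro p hp
      rw [Finset.HasAntidiagonal.mem_antidiagonal] at hp
      show MvPowerSeries.coeff p.1 (piF f) * MvPowerSeries.coeff p.2 (piF g) = 0
      rw [coeff_piF, coeff_piF]
      by_cases h1 : chiZero p.1
      · have h2 : ¬ chiZero p.2 := by
          intro h2
          apply h
          intro i
          rw [← hp, Finsupp.add_apply, h1 i, h2 i]
        rw [if_neg h2, mul_zero]
      · rw [if_neg h1, zero_mul]
  map_zero' := by
    apply MvPowerSeries.ext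
    intro e
    rw [coeff_piF, map_zero]
    simp
  map_add' f g := by
    apply MvPowerSeries.ext
    intro e
    show (if chiZero e then (MvPowerSeries.coeff e) (f + g) else 0)
      = MvPowerSeries.coeff e (piF f) + MvPowerSeries.coeff e (piF g)
    rw [coeff_piF, coeff_piF, map_add]
    by_cases h : chiZero e
    · rw [if_pos h, if_pos h, if_pos h]
    · rw [if_neg h, if_neg h, if_neg h, add_zero]

lemma coeff_piH (f : MvPowerSeries (Vv n) ℂ) (e : Vv n →₀ ℕ) :
    MvPowerSeries.coeff e (piH f) = if chiZero e then MvPowerSeries.coeff e f else 0 := rfl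

lemma coeff_prodpow_piH (a : Vv n → MvPowerSeries (Vv n) ℂ) (D : Vv n →₀ ℕ)
    {μ : Vv n →₀ ℕ} (hμ : chiZero μ) :
    MvPowerSeries.coeff μ (∏ v, (a v) ^ D v)
      = MvPowerSeries.coeff μ (∏ v, (piH (a v)) ^ D v) := by
  have h1 : (∏ v, (piH (a v)) ^ D v) = piH (∏ v, (a v) ^ D v) := by
    rw [map_prod]
    apply Finset.prod_congr rfl
    intro v _
    rw [map_pow]
  rw [h1, coeff_piH, if_pos hμ]

lemma ordGe_piH_Gbar {G : MvPowerSeries (Wv n) ℂ} {s : ℕ}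
    (hmin : ∀ k, k < s → MvPowerSeries.coeff (Finsupp.single (Sum.inr ()) k) G = 0) :
    OrdGe ωτ (piH (pssubst sBar (psconj G))) s := by
  intro e he
  rw [wdeg_ωτ] at he
  rw [coeff_piH]
  by_cases h : chiZero e
  · rw [if_pos h]
    apply coeff_Gbar_elim
    intro d' hd'
    have hz : ∀ i, d' (Sum.inl i) = 0 := by
      intro i
      have h2 := Finsupp.ext_iff.mp hd' (Sum.inr (Sum.inl i))
      rw [mapC_c] at h2
      rw [h2]
      exact h i
    have ht : d' (Sum.inr ()) = e (tv n) := by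
      have h2 := Finsupp.ext_iff.mp hd' (tv n)
      rwa [mapC_t] at h2
    rw [eq_single_w d' hz]
    exact hmin _ (by rw [ht]; exact he)
  · rw [if_neg h]

lemma piH_Gbar_zero {G : MvPowerSeries (Wv n) ℂ}
    (hall : ∀ k, MvPowerSeries.coeff (Finsupp.single (Sum.inr ()) k) G = 0) :
    piH (pssubst sBar (psconj G)) = 0 := by
  apply MvPowerSeries.ext
  intro e
  rw [map_zero, coeff_piH]
  by_cases h : chiZero e
  · rw [if_pos h]
    apply coeff_Gbar_elim
    intro d' hd'
    have hz : ∀ i, d' (Sum.inl i) = 0 := by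
      intro i
      have h2 := Finsupp.ext_iff.mp hd' (Sum.inr (Sum.inl i))
      rw [mapC_c] at h2
      rw [h2]
      exact h i
    rw [eq_single_w d' hz]
    exact hall _
  · rw [if_neg h]

lemma ordGe_piH_Fbar {Fi : MvPowerSeries (Wv n) ℂ}
    (hF : MvPowerSeries.constantCoeff Fi = 0) :
    OrdGe ωτ (piH (pssubst sBar (psconj Fi))) 1 := by
  intro e he
  rw [wdeg_ωτ] at he
  rw [coeff_piH]
  by_cases h : chiZero e
  · rw [if_pos h]
    apply coeff_Gbar_elim
    intro d' hd'
    have hz : ∀ i, d' (Sum.inl i) = 0 := by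
      intro i
      have h2 := Finsupp.ext_iff.mp hd' (Sum.inr (Sum.inl i))
      rw [mapC_c] at h2
      rw [h2]
      exact h i
    have ht : d' (Sum.inr ()) = e (tv n) := by
      have h2 := Finsupp.ext_iff.mp hd' (tv n)
      rwa [mapC_t] at h2
    have hd0 : d' = 0 := by
      rw [eq_single_w d' hz, ht, show e (tv n) = 0 from by omega, Finsupp.single_zero]
    rw [hd0, MvPowerSeries.coeff_zero_eq_constantCoeff]
    exact hF
  · rw [if_neg h]

lemma coeff_RHS_vanish (A : Vv n → MvPowerSeries (Vv n) ℂ) (m' : ℕ)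
    (Qt' : MvPowerSeries (Vv n) ℂ) {μ : Vv n →₀ ℕ}
    (hTau : MvPowerSeries.coeff μ (A (tv n)) = 0)
    (hA : ∀ D : Vv n →₀ ℕ, Finsupp.single (tv n) m' ≤ D →
      MvPowerSeries.coeff (D - Finsupp.single (tv n) m') Qt' ≠ 0 →
      MvPowerSeries.coeff μ (∏ v, (A v) ^ D v) = 0) :
    MvPowerSeries.coeff μ (pssubst A
      (MvPowerSeries.X (tv n) + MvPowerSeries.X (tv n) ^ m' * Qt')) = 0 := by
  rw [coeff_pssubst]
  apply Finset.sum_eq_zero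
  intro D _
  have hQ' : MvPowerSeries.coeff D
        (MvPowerSeries.X (tv n) + MvPowerSeries.X (tv n) ^ m' * Qt')
      = (if D = Finsupp.single (tv n) 1 then 1 else 0)
        + (if Finsupp.single (tv n) m' ≤ D
           then MvPowerSeries.coeff (D - Finsupp.single (tv n) m') Qt' else 0) := by
    rw [map_add, MvPowerSeries.coeff_X, MvPowerSeries.X_pow_eq,
      MvPowerSeries.coeff_monomial_mul]
    simp only [one_mul]
  rw [hQ', add_mul]
  have t1 : (if D = Finsupp.single (tv n) 1 then (1:ℂ) else 0)
      * MvPowerSeries.coeff μ (∏ v, (A v) ^ D v) = 0 := by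
    by_cases hD : D = Finsupp.single (tv n) 1
    · rw [if_pos hD, one_mul, hD]
      rw [show (∏ v, (A v) ^ (Finsupp.single (tv n) 1) v) = A (tv n) from by
        rw [prodpow_single, pow_one]]
      exact hTau
    · rw [if_neg hD, zero_mul]
  have t2 : (if Finsupp.single (tv n) m' ≤ D
        then MvPowerSeries.coeff (D - Finsupp.single (tv n) m') Qt' else 0)
      * MvPowerSeries.coeff μ (∏ v, (A v) ^ D v) = 0 := by
    by_cases hle : Finsupp.single (tv n) m' ≤ D
    · rw [if_pos hle]
      by_cases hc : MvPowerSeries.coeff (D - Finsupp.single (tv n) m') Qt' = 0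
      · rw [hc, zero_mul]
      · rw [hA D hle hc, mul_zero]
    · rw [if_neg hle, zero_mul]
  rw [t1, t2, add_zero]

/-- weights: χ ↦ 1, τ ↦ s -/
def bW (s : ℕ) : Vv n → ℕ := fun v => match v with
  | Sum.inl _ => 0
  | Sum.inr (Sum.inl _) => 1
  | Sum.inr (Sum.inr _) => s

lemma sum_bW (D : Vv n →₀ ℕ) (s : ℕ) :
    ∑ v, D v * bW s v = (∑ i, D (Sum.inr (Sum.inl i))) + D (tv n) * s := by
  simp [bW, Fintype.sum_sum_type, tv]

/-- weights: τ ↦ s only -/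
def bT (s : ℕ) : Vv n → ℕ := fun v => match v with
  | Sum.inr (Sum.inr _) => s
  | _ => 0

lemma sum_bT (D : Vv n →₀ ℕ) (s : ℕ) : ∑ v, D v * bT s v = D (tv n) * s := by
  simp [bT, Fintype.sum_sum_type, tv]

lemma ordGe_Gbar {G : MvPowerSeries (Wv n) ℂ} {s : ℕ}
    (hf : ∀ d' : Wv n →₀ ℕ, d' (Sum.inr ()) < s → MvPowerSeries.coeff d' G = 0) :
    OrdGe ωτ (pssubst sBar (psconj G)) s := by
  intro e he
  rw [wdeg_ωτ] at he
  apply coeff_Gbar_elim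
  intro d' hd'
  apply hf
  have h2 := Finsupp.ext_iff.mp hd' (tv n)
  rw [mapC_t] at h2
  omega
end NM

/-- Corollary (nomaps): if 1 < m' ≤ m and m < 2m'-1, every formal map sending the
m-infinite type M into the m'-infinite type M' is either CR-transversal or
transversally flat. -/
theorem stmt_6 (n m m' : ℕ) (hm'1 : 1 < m') (hm'm : m' ≤ m) (hm2 : m < 2 * m' - 1)
    (Qt Qt' : MvPowerSeries (Vv n) ℂ)
(hQtz0 : ∀ d : Vv n →₀ ℕ, (∀ i, d (Sum.inr (Sum.inl i)) = 0) → MvPowerSeries.coeff d Qt = 0)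
    (hQtχ0 : ∀ d : Vv n →₀ ℕ, (∀ i, d (Sum.inl i) = 0) → MvPowerSeries.coeff d Qt = 0)
    (hQtnt : ∃ d : Vv n →₀ ℕ, d (tv n) = 0 ∧ MvPowerSeries.coeff d Qt ≠ 0)
(hQt'z0 : ∀ d : Vv n →₀ ℕ, (∀ i, d (Sum.inr (Sum.inl i)) = 0) → MvPowerSeries.coeff d Qt' = 0)
    (hQt'χ0 : ∀ d : Vv n →₀ ℕ, (∀ i, d (Sum.inl i) = 0) → MvPowerSeries.coeff d Qt' = 0)
    (hQt'nt : ∃ d : Vv n →₀ ℕ, d (tv n) = 0 ∧ MvPowerSeries.coeff d Qt' ≠ 0)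
(F : Fin n → MvPowerSeries (Wv n) ℂ) (G : MvPowerSeries (Wv n) ℂ)
    (hF0 : ∀ i, MvPowerSeries.constantCoeff (F i) = 0)
    (hG0 : MvPowerSeries.constantCoeff G = 0)
    (hmap : SendsInto (MvPowerSeries.X (tv n) + (MvPowerSeries.X (tv n)) ^ m * Qt)
      (MvPowerSeries.X (tv n) + (MvPowerSeries.X (tv n)) ^ m' * Qt') F G) :
    MvPowerSeries.coeff (Finsupp.single (Sum.inr ()) 1) G ≠ 0 ∨ G = 0 := by
  classical
  unfold SendsInto at hmap
  have hm2' : 2 ≤ m := by omega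
  have hQχ : NM.OrdGe NM.ωχ Qt 1 := by
    intro d hd
    apply hQtz0
    rw [← NM.wdeg_ωχ_eq_zero]
    omega
  by_cases hex : ∃ k, MvPowerSeries.coeff (Finsupp.single (Sum.inr ()) k) G ≠ 0
  case neg =>
    right
    push_neg at hex
    apply MvPowerSeries.ext
    intro d
    rw [map_zero, ← NM.coeff_L_mapW (m := m) hQχ G d, hmap]
    apply NM.coeff_RHS_vanish
    · show MvPowerSeries.coeff (NM.mapW d) (pssubst sBar (psconj G)) = 0
      apply NM.coeff_Gbar_elim
      intro d' hd'
      have hz : ∀ i, d' (Sum.inl i) = 0 := by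
        intro i
        have h2 := Finsupp.ext_iff.mp hd' (Sum.inr (Sum.inl i))
        rw [NM.mapC_c, NM.mapW_c] at h2
        exact h2
      rw [NM.eq_single_w d' hz]
      exact hex _
    · intro D hle hcne
      rw [NM.coeff_prodpow_piH _ _ (NM.chiZero_mapW d)]
      have hzero : (∏ v, (NM.piH ((fun v => match v with
          | Sum.inl i => pssubst (sLHS (MvPowerSeries.X (tv n)
              + (MvPowerSeries.X (tv n)) ^ m * Qt)) (F i)
          | Sum.inr (Sum.inl i) => pssubst sBar (psconj (F i))
          | Sum.inr (Sum.inr _) => pssubst sBar (psconj G)) v)) ^ D v) = 0 := by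
        apply Finset.prod_eq_zero (Finset.mem_univ (tv n))
        show NM.piH (pssubst sBar (psconj G)) ^ D (tv n) = 0
        rw [NM.piH_Gbar_zero hex]
        exact zero_pow (by have := Finsupp.single_le_iff.mp hle; omega)
      rw [hzero, map_zero]
  case pos =>
    have hs := Nat.find_spec hex
    set s := Nat.find hex with hsdef
    have hmin : ∀ k, k < s →
        MvPowerSeries.coeff (Finsupp.single (Sum.inr ()) k) G = 0 := by
      intro k hk
      have := Nat.find_min hex hk
      exact not_not.mp this
    have hs1 : 1 ≤ s := by
      rcases Nat.eq_zero_or_pos s with h0 | h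
      · exfalso
        apply hs
        rw [h0, Finsupp.single_zero, MvPowerSeries.coeff_zero_eq_constantCoeff]
        exact hG0
      · exact h
    by_cases hseq : s = 1
    · left
      rw [← hseq]
      exact hs
    have hs2 : 2 ≤ s := by omega
    exfalso
    have hK : m + s - 1 < m' * s := by
      obtain ⟨a, ha⟩ : ∃ a, m' = a + 2 := ⟨m' - 2, by omega⟩
      obtain ⟨b, hb⟩ : ∃ b, s = b + 2 := ⟨s - 2, by omega⟩
      rw [ha, hb]
      have hexp : (a + 2) * (b + 2) = a * b + 2 * a + 2 * b + 4 := by ring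
      have hab : 0 ≤ a * b := Nat.zero_le _
      have hm3 : m ≤ 2 * a + 2 := by omega
      calc m + (b + 2) - 1 = m + b + 1 := by omega
        _ < (a + 2) * (b + 2) := by linarith
    have fact2 : ∀ d' : Wv n →₀ ℕ, (¬ ∀ i, d' (Sum.inl i) = 0) → d' (Sum.inr ()) ≤ m' * s →
        MvPowerSeries.coeff d' G = 0 := by
      intro d' hz hj
      rw [← NM.coeff_L_mapW (m := m) hQχ G d', hmap]
      apply NM.coeff_RHS_vanish
      · show MvPowerSeries.coeff (NM.mapW d') (pssubst sBar (psconj G)) = 0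
        apply NM.coeff_Gbar_elim
        intro d'' hd''
        exfalso
        apply hz
        intro i
        have h2 := Finsupp.ext_iff.mp hd'' (Sum.inl i)
        rw [NM.mapC_z, NM.mapW_z] at h2
        exact h2.symm
      · intro D hle hcne
        rw [NM.coeff_prodpow_piH _ _ (NM.chiZero_mapW d')]
        have hall : ∀ v : Vv n, NM.OrdGe NM.ωτ (NM.piH ((fun v => match v with
            | Sum.inl i => pssubst (sLHS (MvPowerSeries.X (tv n)
                + (MvPowerSeries.X (tv n)) ^ m * Qt)) (F i)
            | Sum.inr (Sum.inl i) => pssubst sBar (psconj (F i))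
            | Sum.inr (Sum.inr _) => pssubst sBar (psconj G)) v)) (NM.bW s v) := by
          intro v
          match v with
          | Sum.inl i => exact NM.OrdGe.zero _ _
          | Sum.inr (Sum.inl i) => exact NM.ordGe_piH_Fbar (hF0 i)
          | Sum.inr (Sum.inr ()) => exact NM.ordGe_piH_Gbar hmin
        apply NM.OrdGe.prodpow _ (NM.bW s) D hall
        rw [NM.wdeg_ωτ, NM.sum_bW, NM.mapW_t]
        have h1 : m' ≤ D (tv n) := Finsupp.single_le_iff.mp hle
        have h2 : ∃ i, D (Sum.inr (Sum.inl i)) ≠ 0 := by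
          by_contra hallχ
          push_neg at hallχ
          apply hcne
          apply hQt'z0
          intro i
          rw [Finsupp.tsub_apply, hallχ i]
          simp
        obtain ⟨i0, hi0⟩ := h2
        have h3 : D (Sum.inr (Sum.inl i0)) ≤ ∑ i, D (Sum.inr (Sum.inl i)) :=
          Finset.single_le_sum (f := fun i => D (Sum.inr (Sum.inl i)))
            (fun _ _ => Nat.zero_le _) (Finset.mem_univ i0)
        have h4 : m' * s ≤ D (tv n) * s := Nat.mul_le_mul_right s h1
        omega
    have fact1 : ∀ d' : Wv n →₀ ℕ, d' (Sum.inr ()) < s →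
        MvPowerSeries.coeff d' G = 0 := by
      intro d' hj
      by_cases hz : ∀ i, d' (Sum.inl i) = 0
      · rw [NM.eq_single_w d' hz]
        exact hmin _ hj
      · apply fact2 d' hz
        have : s ≤ m' * s := Nat.le_mul_of_pos_left s (by omega)
        omega
    obtain ⟨d0, hd0τ, hd0⟩ := hQtnt
    have hd0χ : ¬ ∀ i, d0 (Sum.inr (Sum.inl i)) = 0 := fun h => hd0 (hQtz0 d0 h)
    have hd0z : ¬ ∀ i, d0 (Sum.inl i) = 0 := fun h => hd0 (hQtχ0 d0 h)
    set μ : Vv n →₀ ℕ := d0 + Finsupp.single (tv n) (m + s - 1) with hμdef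
    have hμτ : μ (tv n) = m + s - 1 := by
      rw [hμdef, Finsupp.add_apply, hd0τ, Finsupp.single_eq_same, zero_add]
    have hμχ : ¬ ∀ i, μ (Sum.inr (Sum.inl i)) = 0 := by
      intro h
      apply hd0χ
      intro i
      have h2 := h i
      rw [hμdef, Finsupp.add_apply, Finsupp.single_apply,
        if_neg (show ¬ tv n = Sum.inr (Sum.inl i) from by simp [tv])] at h2
      omega
    have hμz : ¬ ∀ i, μ (Sum.inl i) = 0 := by
      intro h
      apply hd0z
      intro i
      have h2 := h i
      rw [hμdef, Finsupp.add_apply, Finsupp.single_apply,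
        if_neg (show ¬ tv n = Sum.inl i from by simp [tv])] at h2
      omega
    have hsub : μ - Finsupp.single (tv n) (m + s - 1) = d0 := by
      ext v
      rw [Finsupp.tsub_apply, hμdef, Finsupp.add_apply]
      omega
    have hL := NM.coeff_L_mid hm2' hs1 hQχ G hμτ hμχ fact1
      (fun d' hz hj => fact2 d' hz (le_trans hj (le_of_lt hK)))
    rw [hsub] at hL
    have hR : MvPowerSeries.coeff μ (pssubst (sLHS (MvPowerSeries.X (tv n)
        + (MvPowerSeries.X (tv n)) ^ m * Qt)) G) = 0 := by
      rw [hmap]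
      apply NM.coeff_RHS_vanish
      · show MvPowerSeries.coeff μ (pssubst sBar (psconj G)) = 0
        apply NM.coeff_Gbar_elim
        intro d'' hd''
        exfalso
        apply hμz
        intro i
        have h2 := Finsupp.ext_iff.mp hd'' (Sum.inl i)
        rw [NM.mapC_z] at h2
        exact h2.symm
      · intro D hle hcne
        have hall : ∀ v : Vv n, NM.OrdGe NM.ωτ ((fun v => match v with
            | Sum.inl i => pssubst (sLHS (MvPowerSeries.X (tv n)
                + (MvPowerSeries.X (tv n)) ^ m * Qt)) (F i)
            | Sum.inr (Sum.inl i) => pssubst sBar (psconj (F i))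
            | Sum.inr (Sum.inr _) => pssubst sBar (psconj G)) v) (NM.bT s v) := by
          intro v
          match v with
          | Sum.inl i => exact NM.OrdGe.zero _ _
          | Sum.inr (Sum.inl i) => exact NM.OrdGe.zero _ _
          | Sum.inr (Sum.inr ()) => exact NM.ordGe_Gbar fact1
        apply NM.OrdGe.prodpow _ (NM.bT s) D hall
        rw [NM.wdeg_ωτ, NM.sum_bT, hμτ]
        have h1 : m' ≤ D (tv n) := Finsupp.single_le_iff.mp hle
        have h4 : m' * s ≤ D (tv n) * s := Nat.mul_le_mul_right s h1
        omega
    rw [hR] at hL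
    have hne : (MvPowerSeries.coeff (Finsupp.single (Sum.inr ()) s) G)
        * (MvPowerSeries.coeff d0 Qt * (s : ℂ)) ≠ 0 := by
      apply mul_ne_zero hs
      apply mul_ne_zero hd0
      rw [Nat.cast_ne_zero]
      omega
    exact hne hL.symm
end
end

section
/- For each positive integer k, the map T_k(z,w) = (z, wᵏ) sends the real-analytic hypersurface M_k ⊂ ℂ² defined by w = w̄ · e^{i|z|²/k} into the hypersurface M ⊂ ℂ² defined by w = w̄ · e^{i|z|²}. Consequently, the maps H_k(z,w) = (√k z, wᵏ) are holomorphic self-maps of the 1-infinite type hypersurface M = {w = w̄ e^{i|z|²}} of transversal order k, for every k ≥ 1. -/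
open Complex

lemma ideriv_pow (k : ℕ) : ∀ j, iteratedDeriv j (fun w : ℂ => w ^ k) =
    fun w => (k.descFactorial j : ℂ) * w ^ (k - j) := by
  intro j
  induction j with
  | zero => simp
  | succ j ih =>
    rw [iteratedDeriv_succ, ih]
    funext w
    rw [deriv_const_mul _ (differentiableAt_pow _), deriv_pow_field]
    have : k - (j + 1) = (k - j) - 1 := by omega
    rw [this, Nat.descFactorial_succ]
    push_cast
    ring

/-- Example (type1): T_k(z,w) = (z,wᵏ) maps M_k = {w = w̄·e^{i|z|²/k}} into
M = {w = w̄·e^{i|z|²}}; consequently H_k(z,w) = (√k·z, wᵏ) is a holomorphic self-map of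
the 1-infinite type hypersurface M, and its normal component wᵏ has transversal order k. -/
theorem stmt_11 (k : ℕ) (hk : 1 ≤ k) :
    (∀ z w : ℂ, w = (starRingEnd ℂ) w * Complex.exp (Complex.I * (Complex.normSq z : ℂ) / k) →
      w ^ k = (starRingEnd ℂ) (w ^ k) * Complex.exp (Complex.I * (Complex.normSq z : ℂ))) ∧
    (∀ z w : ℂ, w = (starRingEnd ℂ) w * Complex.exp (Complex.I * (Complex.normSq z : ℂ)) →
      w ^ k = (starRingEnd ℂ) (w ^ k) *
        Complex.exp (Complex.I * (Complex.normSq (((Real.sqrt k : ℝ) : ℂ) * z) : ℂ))) ∧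
    (∀ j, j < k → iteratedDeriv j (fun w : ℂ => w ^ k) 0 = 0) ∧
    iteratedDeriv k (fun w : ℂ => w ^ k) 0 ≠ 0 := by
  have hk0 : (k : ℂ) ≠ 0 := Nat.cast_ne_zero.mpr (by omega)
  refine ⟨?_, ?_, ?_, ?_⟩
  · intro z w h
    have he : (k : ℂ) * (Complex.I * (Complex.normSq z : ℂ) / k) =
        Complex.I * (Complex.normSq z : ℂ) := by field_simp
    conv_lhs => rw [h]
    rw [mul_pow, ← map_pow, ← Complex.exp_nat_mul, he]
  · intro z w h
    have hns : (Complex.normSq (((Real.sqrt k : ℝ) : ℂ) * z) : ℂ) =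
        (k : ℂ) * (Complex.normSq z : ℂ) := by
      rw [Complex.normSq_mul, Complex.normSq_ofReal,
        Real.mul_self_sqrt (Nat.cast_nonneg k)]
      push_cast
      ring
    conv_lhs => rw [h]
    rw [mul_pow, ← map_pow, ← Complex.exp_nat_mul, hns]
    ring_nf
  · intro j hj
    rw [ideriv_pow]
    simp [Nat.sub_ne_zero_of_lt hj]
  · rw [ideriv_pow]
    simp [Nat.descFactorial_self, Nat.factorial_ne_zero]
end
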